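/- Let k ⊆ L be an extension of fields with k algebraically closed, and let A be a locally finite ℕ-graded k-algebra. Then A is a projectively simple k-algebra if and only if A ⊗_k L is a projectively simple L-algebra. -/

import Mathlib

/-!
STATEMENT 4: Let `k ⊆ L` be an extension of fields with `k` algebraically closed, and let
`A` be a locally finite ℕ-graded `k`-algebra.  Then `A` is a projectively simple
`k`-algebra iff `A ⊗_k L` (here realized as `L ⊗[k] A`, graded by `(Aₙ) ⊗ L`) is a
projectively simple `L`-algebra.

A two-sided ideal `I` of a graded algebra is graded (`I = ⊕ₙ (I ∩ Aₙ)`) iff it is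
spanned by its homogeneous elements; we use the latter formulation, which makes sense
for the base-changed grading as well.
-/

open scoped TensorProduct

/-- The underlying `F`-submodule of a two-sided ideal of an `F`-algebra. -/
def TwoSidedIdeal.ksub (F : Type*) {B : Type*} [CommSemiring F] [Ring B] [Algebra F B]
    (I : TwoSidedIdeal B) : Submodule F B where
  carrier := I
  add_mem' := fun ha hb => I.add_mem ha hb
  zero_mem' := I.zero_mem
  smul_mem' := fun c x hx => by
    rw [Algebra.smul_def]
    exact I.mul_mem_left _ _ hx

/-- A two-sided ideal of a graded algebra is *graded* iff it is spanned (as a submodule)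
by its homogeneous elements. -/
def IsGradedTwoSidedIdeal {F B : Type*} [CommSemiring F] [Ring B] [Algebra F B]
    (ℬ : ℕ → Submodule F B) (I : TwoSidedIdeal B) : Prop :=
  (I : Set B) ⊆ (Submodule.span F {x : B | x ∈ I ∧ ∃ n, x ∈ ℬ n} : Submodule F B)

/-- Projective simplicity of an ℕ-graded algebra over a field `F`:
it is infinite dimensional over `F` and every nonzero graded two-sided ideal has finite
codimension. -/
def ProjectivelySimple (F : Type*) {B : Type*} [Field F] [Ring B] [Algebra F B]
    (ℬ : ℕ → Submodule F B) : Prop :=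
  ¬ FiniteDimensional F B ∧
  ∀ I : TwoSidedIdeal B, I ≠ ⊥ → IsGradedTwoSidedIdeal ℬ I →
    FiniteDimensional F (B ⧸ I.ksub F)


set_option synthInstance.maxHeartbeats 1000000
set_option maxHeartbeats 4000000

section MyAux

section Aux
variable {k L A : Type*} [Field k] [Field L] [Algebra k L] [Ring A] [Algebra k A]

lemma exists_dual_family {m : ℕ} {l : Fin m → L} (hl : LinearIndependent k l) (j : Fin m) :
    ∃ f : L →ₗ[k] k, ∀ i, f (l i) = if i = j then 1 else 0 := by
  obtain ⟨h, hh⟩ := (Submodule.span k (Set.range l)).subtype.exists_leftInverse_of_injective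
    (Submodule.ker_subtype _)
  refine ⟨((Finsupp.lapply j).comp hl.repr).comp h, fun i => ?_⟩
  have h1 : h (l i) = ⟨l i, Submodule.subset_span ⟨i, rfl⟩⟩ := by
    have := congrArg (fun f => f ⟨l i, Submodule.subset_span ⟨i, rfl⟩⟩) hh
    simpa using this
  have h2 := hl.repr_eq_single i ⟨l i, Submodule.subset_span ⟨i, rfl⟩⟩ rfl
  simp [h1, h2, Finsupp.single_apply]

lemma eq_zero_of_sum_tmul_eq_zero {m : ℕ} {l : Fin m → L} (hl : LinearIndependent k l)
    (c : Fin m → A) (h : ∑ i, l i ⊗ₜ[k] c i = (0 : L ⊗[k] A)) (j : Fin m) : c j = 0 := by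
  obtain ⟨f, hf⟩ := exists_dual_family hl j
  have := congrArg (TensorProduct.lift ((LinearMap.lsmul k A).comp f)) h
  simp only [map_sum, TensorProduct.lift.tmul, LinearMap.coe_comp, Function.comp_apply,
    LinearMap.lsmul_apply, map_zero, hf, ite_smul, one_smul, zero_smul] at this
  rwa [Finset.sum_ite_eq' Finset.univ j c, if_pos (Finset.mem_univ j)] at this

lemma exists_rep {S : Submodule k A} {z : L ⊗[k] A} (hz : z ∈ S.baseChange L) :
    ∃ (m : ℕ) (l : Fin m → L) (c : Fin m → A), (∀ i, c i ∈ S) ∧ z = ∑ i, l i ⊗ₜ[k] c i := by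
  rw [Submodule.baseChange_eq_span] at hz
  obtain ⟨m, f, g, hsum⟩ := Submodule.mem_span_set'.mp hz
  choose s hs hgs using fun i => (g i).2
  refine ⟨m, f, s, hs, ?_⟩
  rw [← hsum]
  refine Finset.sum_congr rfl fun i _ => ?_
  rw [← hgs i]
  simp [TensorProduct.mk, TensorProduct.smul_tmul', smul_eq_mul]

end Aux

section Aux
variable {k L A : Type*} [Field k] [Field L] [Algebra k L] [Ring A] [Algebra k A]

lemma exists_rep_linearIndependent :
    ∀ (m : ℕ) (l : Fin m → L) (c : Fin m → A) (S : Submodule k A), (∀ i, c i ∈ S) →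
    ∃ (m' : ℕ), m' ≤ m ∧ ∃ (l' : Fin m' → L) (c' : Fin m' → A),
      LinearIndependent k l' ∧ (∀ i, c' i ∈ S) ∧
      ∑ i, l' i ⊗ₜ[k] c' i = ∑ i, l i ⊗ₜ[k] c i := by
  intro m
  induction m using Nat.strong_induction_on with
  | _ m ih =>
    intro l c S hc
    by_cases hli : LinearIndependent k l
    · exact ⟨m, le_rfl, l, c, hli, hc, rfl⟩
    · obtain ⟨g, hg, j, hj⟩ := Fintype.not_linearIndependent_iff.mp hli
      match m, l, c, hc, ih, g, hg, j, hj with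
      | n+1, l, c, hc, ih, g, hg, j, hj =>
      have h0 : g j • l j + ∑ i : Fin n, g (j.succAbove i) • l (j.succAbove i) = 0 := by
        rw [← Fin.sum_univ_succAbove (fun i => g i • l i) j]; exact hg
      have h5 : ∑ i : Fin n, g (j.succAbove i) • l (j.succAbove i) = -(g j • l j) :=
        eq_neg_of_add_eq_zero_right h0
      have h4 : ∑ i : Fin n, (-(g j)⁻¹ * g (j.succAbove i)) • l (j.succAbove i) = l j := by
        have : ∑ i : Fin n, (-(g j)⁻¹ * g (j.succAbove i)) • l (j.succAbove i)
            = (-(g j)⁻¹) • ∑ i : Fin n, g (j.succAbove i) • l (j.succAbove i) := by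
          rw [Finset.smul_sum]
          exact Finset.sum_congr rfl fun i _ => by rw [mul_smul]
        rw [this, h5, smul_neg, neg_smul, neg_neg, smul_smul, inv_mul_cancel₀ hj, one_smul]
      have key : ∑ i : Fin n, l (j.succAbove i) ⊗ₜ[k]
          (c (j.succAbove i) + (-(g j)⁻¹ * g (j.succAbove i)) • c j) = ∑ i, l i ⊗ₜ[k] c i := by
        rw [Fin.sum_univ_succAbove (fun i => l i ⊗ₜ[k] c i) j]
        have h2 : ∀ i ∈ Finset.univ, l (j.succAbove i) ⊗ₜ[k]
            (c (j.succAbove i) + (-(g j)⁻¹ * g (j.succAbove i)) • c j)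
            = l (j.succAbove i) ⊗ₜ[k] c (j.succAbove i)
              + ((-(g j)⁻¹ * g (j.succAbove i)) • l (j.succAbove i)) ⊗ₜ[k] c j := fun i _ => by
          rw [TensorProduct.tmul_add, TensorProduct.smul_tmul]
        rw [Finset.sum_congr rfl h2, Finset.sum_add_distrib, ← TensorProduct.sum_tmul, h4]
        exact add_comm _ _
      obtain ⟨m', hm', l', c', hli', hc', hsum'⟩ := ih n (Nat.lt_succ_self n)
        (fun i => l (j.succAbove i))
        (fun i => c (j.succAbove i) + (-(g j)⁻¹ * g (j.succAbove i)) • c j) S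
        (fun i => S.add_mem (hc _) (S.smul_mem _ (hc j)))
      exact ⟨m', hm'.trans (Nat.le_succ n), l', c', hli', hc', hsum'.trans key⟩
end Aux
open scoped TensorProduct
set_option synthInstance.maxHeartbeats 400000
set_option maxHeartbeats 1000000

section Graded
variable {k A : Type*} [Field k] [Ring A] [Algebra k A]
  (𝒜 : ℕ → Submodule k A) [GradedAlgebra 𝒜]

lemma decompose_mem_span_of_forall_homog {s : Set A} (hs : ∀ x ∈ s, ∃ n, x ∈ 𝒜 n)
    {x : A} (hx : x ∈ Submodule.span k s) (d : ℕ) :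
    ((DirectSum.decompose 𝒜 x) d : A) ∈ Submodule.span k s := by
  induction hx using Submodule.span_induction with
  | mem y hy =>
    obtain ⟨n, hn⟩ := hs y hy
    by_cases hnd : n = d
    · subst hnd
      rw [DirectSum.decompose_of_mem_same 𝒜 hn]
      exact Submodule.subset_span hy
    · rw [DirectSum.decompose_of_mem_ne 𝒜 hn hnd]
      exact Submodule.zero_mem _
  | zero => rw [DirectSum.decompose_zero]; simp
  | add y z _ _ hy hz =>
    rw [DirectSum.decompose_add, DirectSum.add_apply, Submodule.coe_add]
    exact Submodule.add_mem _ hy hz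
  | smul e y _ hy =>
    rw [DirectSum.decompose_smul, DirectSum.smul_apply, Submodule.coe_smul]
    exact Submodule.smul_mem _ _ hy

lemma infinite_nonzero_pieces (hlf : ∀ n, FiniteDimensional k (𝒜 n))
    (h : ¬ FiniteDimensional k A) : {d : ℕ | 𝒜 d ≠ ⊥}.Infinite := by
  by_contra hfin
  rw [Set.not_infinite] at hfin
  apply h
  classical
  set W : Submodule k A := hfin.toFinset.sup 𝒜 with hW
  have htop : W = ⊤ := by
    rw [eq_top_iff]
    intro x _
    rw [← DirectSum.sum_support_decompose 𝒜 x]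
    refine Submodule.sum_mem _ fun d _ => ?_
    by_cases hd : 𝒜 d = ⊥
    · exact le_of_eq_of_le hd bot_le (SetLike.coe_mem _)
    · exact Finset.le_sup (f := 𝒜) (hfin.mem_toFinset.mpr hd) (SetLike.coe_mem _)
  haveI : FiniteDimensional k W := Submodule.finiteDimensional_finset_sup _ _
  exact Module.Finite.equiv (LinearEquiv.ofTop W htop)

lemma exists_nonzero_le_span (hlf : ∀ n, FiniteDimensional k (𝒜 n))
    (h : ¬ FiniteDimensional k A) {s : Set A} (hs : ∀ x ∈ s, ∃ n, x ∈ 𝒜 n)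
    (hfd : FiniteDimensional k (A ⧸ Submodule.span k s)) :
    ∃ d, 𝒜 d ≠ ⊥ ∧ 𝒜 d ≤ Submodule.span k s := by
  set W := Submodule.span k s with hWdef
  have hcof : {d : ℕ | ¬ 𝒜 d ≤ W}.Finite := by
    by_contra hinf
    haveI := (show {d : ℕ | ¬ 𝒜 d ≤ W}.Infinite from hinf).to_subtype
    have hv : ∀ d : {d : ℕ | ¬ 𝒜 d ≤ W}, ∃ x, x ∈ 𝒜 (d : ℕ) ∧ x ∉ W := by
      intro d
      have hd := d.2
      rw [Set.mem_setOf_eq, SetLike.not_le_iff_exists] at hd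
      exact ⟨hd.choose, hd.choose_spec.1, hd.choose_spec.2⟩
    choose v hv1 hv2 using hv
    have hli : LinearIndependent k (fun d => W.mkQ (v d)) := by
      rw [linearIndependent_iff']
      intro t g hg d hd
      have hmem : (∑ i ∈ t, g i • v i) ∈ W := by
        have h0 : W.mkQ (∑ i ∈ t, g i • v i) = 0 := by
          rw [map_sum]
          simpa using hg
        rwa [← Submodule.Quotient.mk_eq_zero, ← Submodule.mkQ_apply]
      have hcomp := decompose_mem_span_of_forall_homog 𝒜 hs hmem (d : ℕ)
      have hsum : ((DirectSum.decompose 𝒜 (∑ i ∈ t, g i • v i)) (d : ℕ) : A)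
          = g d • v d := by
        rw [DirectSum.decompose_sum, DFinsupp.finset_sum_apply, AddSubmonoidClass.coe_finset_sum]
        have h1 : ∀ i ∈ t, ((DirectSum.decompose 𝒜 (g i • v i)) (d : ℕ) : A)
            = if i = d then g d • v d else 0 := by
          intro i _
          by_cases hid : i = d
          · subst hid
            rw [DirectSum.decompose_of_mem_same 𝒜 (Submodule.smul_mem _ _ (hv1 i)), if_pos rfl]
          · rw [DirectSum.decompose_of_mem_ne 𝒜 (Submodule.smul_mem _ _ (hv1 i))
              (fun hc => hid (Subtype.coe_injective hc)), if_neg hid]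
        rw [Finset.sum_congr rfl h1, Finset.sum_ite_eq' t d, if_pos hd]
      rw [hsum] at hcomp
      by_contra hgd
      exact hv2 d (by
        have : (g d)⁻¹ • (g d • v d) ∈ W := Submodule.smul_mem _ _ hcomp
        rwa [smul_smul, inv_mul_cancel₀ hgd, one_smul] at this)
    exact Module.Finite.not_linearIndependent_of_infinite _ hli
  obtain ⟨d, hd⟩ := ((infinite_nonzero_pieces 𝒜 hlf h).diff hcof).nonempty
  exact ⟨d, hd.1, not_not.mp hd.2⟩

end Graded
section BC

variable {k L A : Type*} [Field k] [Field L] [Algebra k L] [Ring A] [Algebra k A]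

lemma findim_of_findim_baseChange {M : Type*} [AddCommGroup M] [Module k M]
    (h : FiniteDimensional L (L ⊗[k] M)) : FiniteDimensional k M := by
  have h1 : Module.rank L (L ⊗[k] M) < Cardinal.aleph0 := Module.rank_lt_aleph0_iff.mpr h
  rw [Module.rank_baseChange, Cardinal.lift_lt_aleph0] at h1
  exact Module.rank_lt_aleph0_iff.mp h1

lemma one_tmul_ne_zero {x : A} (hx : x ≠ 0) : (1:L) ⊗ₜ[k] x ≠ (0 : L ⊗[k] A) := by
  intro h
  refine hx ?_
  have h1 : LinearIndependent k (fun _ : Fin 1 => (1:L)) :=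
    linearIndependent_unique_iff.mpr one_ne_zero
  exact eq_zero_of_sum_tmul_eq_zero h1 (fun _ => x) (by simpa using h) 0

lemma findim_quotient_of_tmul_mem {J : TwoSidedIdeal (L ⊗[k] A)} {S : Submodule k A}
    (hS : ∀ s ∈ S, (1:L) ⊗ₜ[k] s ∈ J) (hfd : FiniteDimensional k (A ⧸ S)) :
    FiniteDimensional L ((L ⊗[k] A) ⧸ J.ksub L) := by
  let f : A →ₗ[k] ((L ⊗[k] A) ⧸ J.ksub L) :=
    (((J.ksub L).mkQ).restrictScalars k).comp ((TensorProduct.mk k L A) 1)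
  have hker : S ≤ LinearMap.ker f := by
    intro s hs
    have : (1:L) ⊗ₜ[k] s ∈ J.ksub L := hS s hs
    simp only [f, LinearMap.mem_ker, LinearMap.coe_comp, Function.comp_apply,
      LinearMap.coe_restrictScalars, Submodule.mkQ_apply, TensorProduct.mk_apply]
    rwa [Submodule.Quotient.mk_eq_zero]
  let g := LinearMap.liftBaseChange L (S.liftQ f hker)
  have hsurj : Function.Surjective g := by
    intro y
    obtain ⟨b, rfl⟩ := Submodule.mkQ_surjective _ y
    induction b using TensorProduct.induction_on with
    | zero => exact ⟨0, by simp⟩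
    | tmul l a =>
      refine ⟨l ⊗ₜ[k] Submodule.Quotient.mk a, ?_⟩
      rw [LinearMap.liftBaseChange_tmul, Submodule.liftQ_apply]
      show l • Submodule.Quotient.mk ((1:L) ⊗ₜ[k] a) = _
      rw [← Submodule.Quotient.mk_smul, TensorProduct.smul_tmul', smul_eq_mul, mul_one]
      rfl
    | add b c hb hc =>
      obtain ⟨xb, hxb⟩ := hb
      obtain ⟨xc, hxc⟩ := hc
      exact ⟨xb + xc, by rw [map_add, hxb, hxc, ← map_add]⟩
  haveI : Module.Finite k (A ⧸ S) := hfd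
  exact Module.Finite.of_surjective g hsurj

lemma findim_of_baseChange_quotient {S : Submodule k A}
    (hfd : FiniteDimensional L ((L ⊗[k] A) ⧸ (S.baseChange L))) :
    FiniteDimensional k (A ⧸ S) := by
  let Q := LinearMap.baseChange L S.mkQ
  have hker : S.baseChange L ≤ LinearMap.ker Q := by
    rw [Submodule.baseChange_eq_span, Submodule.span_le]
    rintro x ⟨s, hs, rfl⟩
    simp only [SetLike.mem_coe, LinearMap.mem_ker, TensorProduct.mk_apply, Q,
      LinearMap.baseChange_tmul, Submodule.mkQ_apply]
    rw [(Submodule.Quotient.mk_eq_zero S).mpr hs, TensorProduct.tmul_zero]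
  let g := (S.baseChange L).liftQ Q hker
  have hsurj : Function.Surjective g := by
    intro y
    obtain ⟨x, rfl⟩ := LinearMap.lTensor_surjective L (Submodule.mkQ_surjective S) y
    exact ⟨Submodule.Quotient.mk x, rfl⟩
  apply findim_of_findim_baseChange (L := L)
  exact Module.Finite.of_surjective g hsurj

lemma baseChange_mul_mem_left {S : Submodule k A} (hS : ∀ (a : A) {s}, s ∈ S → a * s ∈ S)
    {x y : L ⊗[k] A} (hy : y ∈ S.baseChange L) : x * y ∈ S.baseChange L := by
  rw [Submodule.baseChange_eq_span] at hy
  induction hy using Submodule.span_induction with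
  | mem w hw =>
    obtain ⟨s, hs, rfl⟩ := hw
    simp only [TensorProduct.mk_apply]
    induction x using TensorProduct.induction_on with
    | zero => rw [zero_mul]; exact Submodule.zero_mem _
    | tmul l a =>
      rw [Algebra.TensorProduct.tmul_mul_tmul, mul_one]
      exact Submodule.tmul_mem_baseChange_of_mem _ (hS a hs)
    | add u v hu hv => rw [add_mul]; exact Submodule.add_mem _ hu hv
  | zero => rw [mul_zero]; exact Submodule.zero_mem _
  | add u v _ _ hu hv => rw [mul_add]; exact Submodule.add_mem _ hu hv
  | smul c w _ hw => rw [mul_smul_comm]; exact Submodule.smul_mem _ _ hw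

lemma baseChange_mul_mem_right {S : Submodule k A} (hS : ∀ (a : A) {s}, s ∈ S → s * a ∈ S)
    {x y : L ⊗[k] A} (hy : y ∈ S.baseChange L) : y * x ∈ S.baseChange L := by
  rw [Submodule.baseChange_eq_span] at hy
  induction hy using Submodule.span_induction with
  | mem w hw =>
    obtain ⟨s, hs, rfl⟩ := hw
    simp only [TensorProduct.mk_apply]
    induction x using TensorProduct.induction_on with
    | zero => rw [mul_zero]; exact Submodule.zero_mem _
    | tmul l a =>
      rw [Algebra.TensorProduct.tmul_mul_tmul, one_mul]
      exact Submodule.tmul_mem_baseChange_of_mem _ (hS a hs)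
    | add u v hu hv => rw [mul_add]; exact Submodule.add_mem _ hu hv
  | zero => rw [zero_mul]; exact Submodule.zero_mem _
  | add u v _ _ hu hv => rw [add_mul]; exact Submodule.add_mem _ hu hv
  | smul c w _ hw => rw [smul_mul_assoc]; exact Submodule.smul_mem _ _ hw

end BC

end MyAux

section HomogIdeal
variable {k A : Type*} [Field k] [Ring A] [Algebra k A]
  (𝒜 : ℕ → Submodule k A) [GradedAlgebra 𝒜]

/-- generating set (by homogeneous elements) of the two-sided ideal generated by `a0`. -/
def homogIdealSet (a0 : A) : Set A :=
  {w | ∃ p q x y, x ∈ 𝒜 p ∧ y ∈ 𝒜 q ∧ w = x * a0 * y}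

lemma homogIdealSet_homog {a0 : A} {n : ℕ} (hn : a0 ∈ 𝒜 n) :
    ∀ x ∈ homogIdealSet 𝒜 a0, ∃ d, x ∈ 𝒜 d := by
  rintro x ⟨p, q, u, v, hu, hv, rfl⟩
  exact ⟨p + n + q, SetLike.mul_mem_graded (SetLike.mul_mem_graded hu hn) hv⟩

lemma mul_mem_homogIdealSpan (a0 : A) (u v : A) :
    u * a0 * v ∈ Submodule.span k (homogIdealSet 𝒜 a0) := by
  classical
  have hkey : u * a0 * v = ∑ p ∈ DFinsupp.support (DirectSum.decompose 𝒜 u),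
      ∑ q ∈ DFinsupp.support (DirectSum.decompose 𝒜 v),
      ((DirectSum.decompose 𝒜 u) p : A) * a0 * ((DirectSum.decompose 𝒜 v) q : A) := by
    conv_lhs => rw [← DirectSum.sum_support_decompose 𝒜 u, ← DirectSum.sum_support_decompose 𝒜 v]
    rw [Finset.sum_mul, Finset.sum_mul]
    exact Finset.sum_congr rfl fun p _ => by rw [Finset.mul_sum]
  rw [hkey]
  refine Submodule.sum_mem _ fun p _ => ?_
  refine Submodule.sum_mem _ fun q _ => ?_
  exact Submodule.subset_span ⟨p, q, _, _, SetLike.coe_mem _, SetLike.coe_mem _, rfl⟩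

lemma mem_homogIdealSpan_self (a0 : A) : a0 ∈ Submodule.span k (homogIdealSet 𝒜 a0) := by
  have := mul_mem_homogIdealSpan 𝒜 a0 1 1
  rwa [one_mul, mul_one] at this

lemma homogIdealSpan_mul_left (a0 : A) (b : A) {s : A}
    (hs : s ∈ Submodule.span k (homogIdealSet 𝒜 a0)) :
    b * s ∈ Submodule.span k (homogIdealSet 𝒜 a0) := by
  induction hs using Submodule.span_induction with
  | mem w hw =>
    obtain ⟨p, q, u, v, hu, hv, rfl⟩ := hw
    have : b * (u * a0 * v) = (b * u) * a0 * v := by rw [← mul_assoc, ← mul_assoc]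
    rw [this]
    exact mul_mem_homogIdealSpan 𝒜 a0 _ _
  | zero => rw [mul_zero]; exact Submodule.zero_mem _
  | add x y _ _ hx hy => rw [mul_add]; exact Submodule.add_mem _ hx hy
  | smul c x _ hx => rw [mul_smul_comm]; exact Submodule.smul_mem _ _ hx

lemma homogIdealSpan_mul_right (a0 : A) (b : A) {s : A}
    (hs : s ∈ Submodule.span k (homogIdealSet 𝒜 a0)) :
    s * b ∈ Submodule.span k (homogIdealSet 𝒜 a0) := by
  induction hs using Submodule.span_induction with
  | mem w hw =>
    obtain ⟨p, q, u, v, hu, hv, rfl⟩ := hw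
    have : (u * a0 * v) * b = u * a0 * (v * b) := by rw [mul_assoc]
    rw [this]
    exact mul_mem_homogIdealSpan 𝒜 a0 _ _
  | zero => rw [zero_mul]; exact Submodule.zero_mem _
  | add x y _ _ hx hy => rw [add_mul]; exact Submodule.add_mem _ hx hy
  | smul c x _ hx => rw [smul_mul_assoc]; exact Submodule.smul_mem _ _ hx

/-- The two-sided ideal generated by a homogeneous element `a0`. -/
def homogIdeal (a0 : A) : TwoSidedIdeal A :=
  TwoSidedIdeal.mk' (Submodule.span k (homogIdealSet 𝒜 a0))
    (Submodule.zero_mem _)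
    (fun hx hy => Submodule.add_mem _ hx hy)
    (fun hx => Submodule.neg_mem _ hx)
    (fun hy => homogIdealSpan_mul_left 𝒜 _ _ hy)
    (fun hx => homogIdealSpan_mul_right 𝒜 _ _ hx)

lemma mem_homogIdeal_iff (a0 : A) (x : A) :
    x ∈ homogIdeal 𝒜 a0 ↔ x ∈ Submodule.span k (homogIdealSet 𝒜 a0) :=
  TwoSidedIdeal.mem_mk' _ _ _ _ _ _ x

lemma homogIdeal_ksub (a0 : A) :
    (homogIdeal 𝒜 a0).ksub k = Submodule.span k (homogIdealSet 𝒜 a0) :=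
  Submodule.ext fun x => mem_homogIdeal_iff 𝒜 a0 x

lemma homogIdeal_ne_bot {a0 : A} (h0 : a0 ≠ 0) : homogIdeal 𝒜 a0 ≠ ⊥ := by
  intro h
  refine h0 ?_
  have : a0 ∈ homogIdeal 𝒜 a0 := (mem_homogIdeal_iff 𝒜 a0 a0).mpr (mem_homogIdealSpan_self 𝒜 a0)
  rw [h] at this
  rwa [TwoSidedIdeal.mem_bot] at this

lemma homogIdeal_isGraded {a0 : A} {n : ℕ} (hn : a0 ∈ 𝒜 n) :
    IsGradedTwoSidedIdeal 𝒜 (homogIdeal 𝒜 a0) := by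
  intro x hx
  have hx' : x ∈ Submodule.span k (homogIdealSet 𝒜 a0) := (mem_homogIdeal_iff 𝒜 a0 x).mp hx
  induction hx' using Submodule.span_induction with
  | mem w hw =>
    refine Submodule.subset_span ?_
    refine ⟨(mem_homogIdeal_iff 𝒜 a0 w).mpr (Submodule.subset_span hw), ?_⟩
    exact homogIdealSet_homog 𝒜 hn w hw
  | zero => exact Submodule.zero_mem _
  | add u v _ _ hu hv =>
    exact Submodule.add_mem _ (hu ((mem_homogIdeal_iff _ _ _).mpr (by assumption)))
      (hv ((mem_homogIdeal_iff _ _ _).mpr (by assumption)))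
  | smul c u _ hu =>
    exact Submodule.smul_mem _ _ (hu ((mem_homogIdeal_iff _ _ _).mpr (by assumption)))

lemma findim_quot_homogIdeal (hPS : ProjectivelySimple k 𝒜) {a0 : A} {n : ℕ}
    (h0 : a0 ≠ 0) (hn : a0 ∈ 𝒜 n) :
    FiniteDimensional k (A ⧸ Submodule.span k (homogIdealSet 𝒜 a0)) := by
  have := hPS.2 (homogIdeal 𝒜 a0) (homogIdeal_ne_bot 𝒜 h0) (homogIdeal_isGraded 𝒜 hn)
  rwa [homogIdeal_ksub] at this

end HomogIdeal


section MainForward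
variable {k L A : Type*} [Field k] [Field L] [Algebra k L] [Ring A] [Algebra k A]

lemma sum_drop_index {m₀ : ℕ} (l : Fin (m₀+1) → L) (c : Fin (m₀+1) → A)
    (j : Fin (m₀+1)) (hj : l j ⊗ₜ[k] c j = 0) :
    ∑ i, l i ⊗ₜ[k] c i = ∑ i : Fin m₀, l (j.succAbove i) ⊗ₜ[k] c (j.succAbove i) := by
  rw [Fin.sum_univ_succAbove (fun i => l i ⊗ₜ[k] c i) j, hj, zero_add]

lemma exists_one_tmul_mem [IsAlgClosed k] (𝒜 : ℕ → Submodule k A) [GradedAlgebra 𝒜]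
    (hlf : ∀ n, FiniteDimensional k (𝒜 n)) (hPS : ProjectivelySimple k 𝒜)
    (J : TwoSidedIdeal (L ⊗[k] A)) (hJne : J ≠ ⊥)
    (hJgr : IsGradedTwoSidedIdeal (fun n => (𝒜 n).baseChange L) J) :
    ∃ (a0 : A) (n : ℕ), a0 ≠ 0 ∧ a0 ∈ 𝒜 n ∧ (1:L) ⊗ₜ[k] a0 ∈ J := by
  classical
  have hJsmulL : ∀ (r : L) {x : L ⊗[k] A}, x ∈ J → r • x ∈ J := by
    intro r x hx
    rw [Algebra.smul_def]
    exact J.mul_mem_left _ _ hx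
  have hJsmulk : ∀ (e : k) {x : L ⊗[k] A}, x ∈ J → e • x ∈ J := by
    intro e x hx
    rw [Algebra.smul_def]
    exact J.mul_mem_left _ _ hx
  -- a nonzero element of J
  obtain ⟨x0, hx0J, hx0ne⟩ : ∃ x, x ∈ J ∧ x ≠ 0 := by
    by_contra h
    push_neg at h
    refine hJne (SetLike.ext fun x => ?_)
    rw [TwoSidedIdeal.mem_bot]
    exact ⟨fun hx => h x hx, fun hx => hx ▸ J.zero_mem⟩
  -- a nonzero homogeneous element of J
  have hzex : ∃ (nz : ℕ) (z : L ⊗[k] A), z ∈ J ∧ z ≠ 0 ∧ z ∈ (𝒜 nz).baseChange L := by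
    by_contra h
    push_neg at h
    have hsub : {x : L ⊗[k] A | x ∈ J ∧ ∃ n, x ∈ (𝒜 n).baseChange L} ⊆ {(0 : L ⊗[k] A)} := by
      rintro x ⟨hxJ, n, hxn⟩
      by_contra hne
      exact h n x hxJ (fun h0 => hne h0) hxn
    have h1 := hJgr hx0J
    have h2 : x0 ∈ Submodule.span L {(0 : L ⊗[k] A)} :=
      Submodule.span_mono hsub h1
    rw [Submodule.span_zero_singleton] at h2
    exact hx0ne h2
  -- minimal length of a nonzero "homogeneous-type" element of J
  have hQ : ∃ m : ℕ, ∃ (nd : ℕ) (z : L ⊗[k] A) (l : Fin m → L) (c : Fin m → A),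
      z ∈ J ∧ z ≠ 0 ∧ (∀ i, c i ∈ 𝒜 nd) ∧ z = ∑ i, l i ⊗ₜ[k] c i := by
    obtain ⟨nz, z, hzJ, hzne, hzb⟩ := hzex
    obtain ⟨m, l, c, hc, hrep⟩ := exists_rep hzb
    exact ⟨m, nz, z, l, c, hzJ, hzne, hc, hrep⟩
  obtain ⟨nd, z, l0, c0, hzJ, hzne, hc0, hrep0⟩ := Nat.find_spec hQ
  -- make coefficients linearly independent
  obtain ⟨m', hm'le, l1, c1, hli1, hc1, hsum1⟩ :=
    exists_rep_linearIndependent (Nat.find hQ) l0 c0 (𝒜 nd) hc0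
  have hm'ge : Nat.find hQ ≤ m' :=
    Nat.find_min' hQ ⟨nd, z, l1, c1, hzJ, hzne, hc1, by rw [hsum1, ← hrep0]⟩
  have hmm : m' = Nat.find hQ := le_antisymm hm'le hm'ge
  have hmpos : 0 < m' := by
    rcases Nat.eq_zero_or_pos m' with h0 | h
    · exfalso
      apply hzne
      rw [hrep0, ← hsum1]
      haveI : IsEmpty (Fin m') := by rw [h0]; infer_instance
      rw [Finset.univ_eq_empty, Finset.sum_empty]
    · exact h
  obtain ⟨m₀, rfl⟩ : ∃ m₀, m' = m₀ + 1 := ⟨m' - 1, (Nat.succ_pred_eq_of_pos hmpos).symm⟩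
  set l : Fin (m₀+1) → L := l1
  set c : Fin (m₀+1) → A := c1
  have hli : LinearIndependent k l := hli1
  have hc : ∀ i, c i ∈ 𝒜 nd := hc1
  have hrep : z = ∑ i, l i ⊗ₜ[k] c i := by rw [hrep0, ← hsum1]
  -- minimality: no nonzero element of J has a representation of length m₀
  have hmin : ¬ (∃ (d : ℕ) (z' : L ⊗[k] A) (l' : Fin m₀ → L) (c' : Fin m₀ → A),
      z' ∈ J ∧ z' ≠ 0 ∧ (∀ i, c' i ∈ 𝒜 d) ∧ z' = ∑ i, l' i ⊗ₜ[k] c' i) := by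
    apply Nat.find_min hQ
    omega
  -- dropping a vanishing coordinate gives a contradiction
  have hshort : ∀ (d : ℕ) (l' : Fin (m₀+1) → L) (c' : Fin (m₀+1) → A) (j : Fin (m₀+1)),
      (∀ i, c' i ∈ 𝒜 d) → (∑ i, l' i ⊗ₜ[k] c' i) ∈ J → l' j ⊗ₜ[k] c' j = 0 →
      (∑ i, l' i ⊗ₜ[k] c' i) ≠ 0 → False := by
    intro d l' c' j hc' hJ' hj hne
    exact hmin ⟨d, ∑ i, l' i ⊗ₜ[k] c' i, fun i => l' (j.succAbove i),
      fun i => c' (j.succAbove i), hJ', hne, fun i => hc' _, sum_drop_index l' c' j hj⟩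
  -- uniqueness principle
  have hU : ∀ (d : ℕ) (w : Fin (m₀+1) → A), (∀ i, w i ∈ 𝒜 d) →
      (∑ i, l i ⊗ₜ[k] w i) ∈ J → w 0 = 0 → ∀ i, w i = 0 := by
    intro d w hw hwJ hw0
    by_cases hz0 : (∑ i, l i ⊗ₜ[k] w i) = 0
    · exact fun i => eq_zero_of_sum_tmul_eq_zero hli w hz0 i
    · exact absurd (hshort d l w 0 hw hwJ (by rw [hw0, TensorProduct.tmul_zero]) hz0) id
  -- the distinguished nonzero homogeneous element of A
  have ha0ne : c 0 ≠ 0 := by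
    intro h0
    apply hzne
    rw [hrep]
    have := hU nd c hc (by rw [← hrep]; exact hzJ) h0
    rw [Finset.sum_congr rfl fun i _ => by rw [this i, TensorProduct.tmul_zero]]
    exact Finset.sum_const_zero
  -- the case of length one
  rcases Nat.eq_zero_or_pos m₀ with hm₀ | hm₀pos
  · subst hm₀
    have hz1 : z = l 0 ⊗ₜ[k] c 0 := by rw [hrep, Fin.sum_univ_one]
    have hl0 : l 0 ≠ 0 := by
      intro h
      apply hzne
      rw [hz1, h, TensorProduct.zero_tmul]
    refine ⟨c 0, nd, ha0ne, hc 0, ?_⟩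
    have := hJsmulL (l 0)⁻¹ hzJ
    rwa [hz1, TensorProduct.smul_tmul', smul_eq_mul, inv_mul_cancel₀ hl0] at this
  · -- main case : derive a contradiction
    exfalso
    have hS₁ : FiniteDimensional k (A ⧸ Submodule.span k (homogIdealSet 𝒜 (c 0))) :=
      findim_quot_homogIdeal 𝒜 hPS ha0ne (hc 0)
    obtain ⟨d, hdne, hdle⟩ := exists_nonzero_le_span 𝒜 hlf hPS.1
      (homogIdealSet_homog 𝒜 (hc 0)) hS₁
    have hj1lt : (1 : ℕ) < m₀ + 1 := by omega
    set j1 : Fin (m₀+1) := ⟨1, hj1lt⟩ with hj1def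
    have hj1ne0 : j1 ≠ 0 := by
      intro h
      have := congrArg Fin.val h
      simp [hj1def] at this
    set gens : Set (Fin (m₀+1) → A) :=
      {w | ∃ p q u v, u ∈ 𝒜 p ∧ v ∈ 𝒜 q ∧ w = fun i => u * c i * v} with hgens
    set gensd : Set (Fin (m₀+1) → A) :=
      {w | ∃ p q u v, u ∈ 𝒜 p ∧ v ∈ 𝒜 q ∧ p + nd + q = d ∧ w = fun i => u * c i * v} with hgensd
    have hP1 : ∀ w ∈ Submodule.span k gensd, ∀ i, w i ∈ 𝒜 d := by
      intro w hw
      induction hw using Submodule.span_induction with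
      | mem w hw =>
        obtain ⟨p, q, u, v, hu, hv, hpq, rfl⟩ := hw
        intro i
        exact hpq ▸ SetLike.mul_mem_graded (SetLike.mul_mem_graded hu (hc i)) hv
      | zero => intro i; simpa using (𝒜 d).zero_mem
      | add x y _ _ hx hy => intro i; simpa using (𝒜 d).add_mem (hx i) (hy i)
      | smul e x _ hx => intro i; simpa using (𝒜 d).smul_mem e (hx i)
    have hP2 : ∀ w ∈ Submodule.span k gensd, (∑ i, l i ⊗ₜ[k] w i) ∈ J := by
      intro w hw
      induction hw using Submodule.span_induction with
      | mem w hw =>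
        obtain ⟨p, q, u, v, hu, hv, hpq, rfl⟩ := hw
        have hmul : ((1:L) ⊗ₜ[k] u) * z * ((1:L) ⊗ₜ[k] v) = ∑ i, l i ⊗ₜ[k] (u * c i * v) := by
          rw [hrep, Finset.mul_sum, Finset.sum_mul]
          refine Finset.sum_congr rfl fun i _ => ?_
          rw [Algebra.TensorProduct.tmul_mul_tmul, Algebra.TensorProduct.tmul_mul_tmul,
            one_mul, mul_one]
        exact hmul ▸ J.mul_mem_right _ _ (J.mul_mem_left _ _ hzJ)
      | zero => simpa using J.zero_mem
      | add x y _ _ hx hy =>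
        have : ∑ i, l i ⊗ₜ[k] (x + y) i = (∑ i, l i ⊗ₜ[k] x i) + ∑ i, l i ⊗ₜ[k] y i := by
          rw [← Finset.sum_add_distrib]
          exact Finset.sum_congr rfl fun i _ => by
            rw [Pi.add_apply, TensorProduct.tmul_add]
        rw [this]
        exact J.add_mem hx hy
      | smul e x _ hx =>
        have : ∑ i, l i ⊗ₜ[k] (e • x) i = e • ∑ i, l i ⊗ₜ[k] x i := by
          rw [Finset.smul_sum]
          exact Finset.sum_congr rfl fun i _ => by
            rw [Pi.smul_apply, TensorProduct.tmul_smul]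
        rw [this]
        exact hJsmulk e hx
    have hproj : (⇑(LinearMap.proj (R := k) (φ := fun _ : Fin (m₀+1) => A) 0)) '' gens
        = homogIdealSet 𝒜 (c 0) := by
      ext y
      constructor
      · rintro ⟨w, ⟨p, q, u, v, hu, hv, rfl⟩, rfl⟩
        exact ⟨p, q, u, v, hu, hv, rfl⟩
      · rintro ⟨p, q, u, v, hu, hv, rfl⟩
        exact ⟨fun i => u * c i * v, ⟨p, q, u, v, hu, hv, rfl⟩, rfl⟩
    set dproj : A →ₗ[k] A := (𝒜 d).subtype ∘ₗ
      (DirectSum.component k ℕ (fun i => ↥(𝒜 i)) d) ∘ₗ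
      (DirectSum.decomposeLinearEquiv 𝒜).toLinearMap with hdprojdef
    have hdproj_apply : ∀ y : A, dproj y = ((DirectSum.decompose 𝒜 y) d : A) := fun y => rfl
    set D : (Fin (m₀+1) → A) →ₗ[k] (Fin (m₀+1) → A) :=
      LinearMap.pi (fun i => dproj ∘ₗ LinearMap.proj i) with hDdef
    have hD_apply : ∀ (w : Fin (m₀+1) → A) (i : Fin (m₀+1)), D w i = dproj (w i) :=
      fun w i => rfl
    have hwit : ∀ x : A, x ∈ 𝒜 d → ∃ w : Fin (m₀+1) → A,
        (∀ i, w i ∈ 𝒜 d) ∧ (∑ i, l i ⊗ₜ[k] w i) ∈ J ∧ w 0 = x := by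
      intro x hx
      have hx1 : x ∈ Submodule.span k (homogIdealSet 𝒜 (c 0)) := hdle hx
      have hx2 : x ∈ Submodule.map (LinearMap.proj (R := k) (φ := fun _ : Fin (m₀+1) => A) 0)
          (Submodule.span k gens) := by
        rw [Submodule.map_span, hproj]
        exact hx1
      obtain ⟨w0, hw0mem, hw0proj⟩ := Submodule.mem_map.mp hx2
      have hDmem : D w0 ∈ Submodule.span k gensd := by
        have hle : Submodule.map D (Submodule.span k gens) ≤ Submodule.span k gensd := by
          rw [Submodule.map_span, Submodule.span_le]
          rintro y ⟨w, ⟨p, q, u, v, hu, hv, rfl⟩, rfl⟩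
          have hmem : ∀ i, u * c i * v ∈ 𝒜 (p + nd + q) := fun i =>
            SetLike.mul_mem_graded (SetLike.mul_mem_graded hu (hc i)) hv
          by_cases hpq : p + nd + q = d
          · refine Submodule.subset_span ⟨p, q, u, v, hu, hv, hpq, ?_⟩
            funext i
            rw [hD_apply, hdproj_apply, DirectSum.decompose_of_mem_same 𝒜 (hpq ▸ hmem i)]
          · have hz' : D (fun i => u * c i * v) = 0 := by
              funext i
              rw [hD_apply, hdproj_apply, DirectSum.decompose_of_mem_ne 𝒜 (hmem i) hpq]
              rfl
            rw [hz']
            exact Submodule.zero_mem _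
        exact hle (Submodule.mem_map_of_mem hw0mem)
      refine ⟨D w0, hP1 _ hDmem, hP2 _ hDmem, ?_⟩
      have : w0 0 = x := hw0proj
      rw [hD_apply, this, hdproj_apply, DirectSum.decompose_of_mem_same 𝒜 hx]
    have huniq : ∀ (w w' : Fin (m₀+1) → A), (∀ i, w i ∈ 𝒜 d) → (∑ i, l i ⊗ₜ[k] w i) ∈ J →
        (∀ i, w' i ∈ 𝒜 d) → (∑ i, l i ⊗ₜ[k] w' i) ∈ J → w 0 = w' 0 → w = w' := by
      intro w w' hw hwJ hw' hw'J h0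
      funext i
      have h1 : ∀ i, w i - w' i ∈ 𝒜 d := fun i => (𝒜 d).sub_mem (hw i) (hw' i)
      have h2 : (∑ i, l i ⊗ₜ[k] (w i - w' i)) ∈ J := by
        have heq : ∑ i, l i ⊗ₜ[k] (w i - w' i)
            = (∑ i, l i ⊗ₜ[k] w i) - ∑ i, l i ⊗ₜ[k] w' i := by
          rw [← Finset.sum_sub_distrib]
          exact Finset.sum_congr rfl fun i _ => TensorProduct.tmul_sub _ _ _
        rw [heq]
        exact J.sub_mem hwJ hw'J
      have h3 := hU d (fun i => w i - w' i) h1 h2 (by simp [h0]) i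
      exact sub_eq_zero.mp h3
    choose wit hwit1 hwit2 hwit3 using fun x : ↥(𝒜 d) => hwit ↑x x.2
    set φ : ↥(𝒜 d) →ₗ[k] ↥(𝒜 d) :=
      { toFun := fun x => ⟨wit x j1, hwit1 x j1⟩
        map_add' := by
          intro x y
          have hadd : wit (x + y) = fun i => wit x i + wit y i := by
            refine huniq _ _ (hwit1 _) (hwit2 _)
              (fun i => (𝒜 d).add_mem (hwit1 x i) (hwit1 y i)) ?_ ?_
            · have heq : ∑ i, l i ⊗ₜ[k] (wit x i + wit y i)
                  = (∑ i, l i ⊗ₜ[k] wit x i) + ∑ i, l i ⊗ₜ[k] wit y i := by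
                rw [← Finset.sum_add_distrib]
                exact Finset.sum_congr rfl fun i _ => TensorProduct.tmul_add _ _ _
              rw [heq]
              exact J.add_mem (hwit2 x) (hwit2 y)
            · rw [hwit3, hwit3, hwit3]
              rfl
          exact Subtype.ext (congrFun hadd j1)
        map_smul' := by
          intro e x
          have hsmul : wit (e • x) = fun i => e • wit x i := by
            refine huniq _ _ (hwit1 _) (hwit2 _)
              (fun i => (𝒜 d).smul_mem e (hwit1 x i)) ?_ ?_
            · have heq : ∑ i, l i ⊗ₜ[k] (e • wit x i)
                  = e • ∑ i, l i ⊗ₜ[k] wit x i := by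
                rw [Finset.smul_sum]
                exact Finset.sum_congr rfl fun i _ => TensorProduct.tmul_smul _ _ _
              rw [heq]
              exact hJsmulk e (hwit2 x)
            · rw [hwit3, hwit3]
              rfl
          exact Subtype.ext (congrFun hsmul j1) } with hφdef
    haveI : FiniteDimensional k ↥(𝒜 d) := hlf d
    haveI : Nontrivial ↥(𝒜 d) := Submodule.nontrivial_iff_ne_bot.mpr hdne
    obtain ⟨μ, hμ⟩ := Module.End.exists_eigenvalue φ
    obtain ⟨v, hv⟩ := hμ.exists_hasEigenvector
    have hveq : φ v = μ • v := hv.apply_eq_smul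
    have hvne : (v : A) ≠ 0 := fun h => hv.2 (by exact_mod_cast Subtype.ext h)
    have hw0 : wit v 0 = (v : A) := hwit3 v
    have hwj1 : wit v j1 = μ • (v : A) := by
      have := congrArg (Subtype.val) hveq
      simpa [hφdef] using this
    have hTJ : (∑ i, l i ⊗ₜ[k] wit v i) ∈ J := hwit2 v
    have hTne : (∑ i, l i ⊗ₜ[k] wit v i) ≠ 0 := by
      intro h
      exact hvne (by rw [← hw0]; exact eq_zero_of_sum_tmul_eq_zero hli (wit v) h 0)
    set l' : Fin (m₀+1) → L :=
      fun i => if i = 0 then l 0 + μ • l j1 else if i = j1 then 0 else l i with hl'def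
    set c' : Fin (m₀+1) → A :=
      fun i => if i = 0 then (v : A) else if i = j1 then 0 else wit v i with hc'def
    have hc' : ∀ i, c' i ∈ 𝒜 d := by
      intro i
      simp only [hc'def]
      split_ifs
      · exact v.2
      · exact (𝒜 d).zero_mem
      · exact hwit1 v i
    have hTeq : ∑ i, l i ⊗ₜ[k] wit v i = ∑ i, l' i ⊗ₜ[k] c' i := by
      have e1 : ∀ (F : Fin (m₀+1) → L ⊗[k] A), ∑ i, F i
          = F 0 + (F j1 + ∑ i ∈ (Finset.univ.erase 0).erase j1, F i) := by
        intro F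
        rw [← Finset.add_sum_erase _ F (Finset.mem_univ 0),
          ← Finset.add_sum_erase _ F (Finset.mem_erase.mpr ⟨hj1ne0, Finset.mem_univ j1⟩)]
      rw [e1 (fun i => l i ⊗ₜ[k] wit v i), e1 (fun i => l' i ⊗ₜ[k] c' i)]
      have tail_eq : ∑ i ∈ (Finset.univ.erase 0).erase j1, l i ⊗ₜ[k] wit v i
          = ∑ i ∈ (Finset.univ.erase 0).erase j1, l' i ⊗ₜ[k] c' i := by
        refine Finset.sum_congr rfl fun i hi => ?_
        have hij1 : i ≠ j1 := (Finset.mem_erase.mp hi).1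
        have hi0 : i ≠ 0 := (Finset.mem_erase.mp (Finset.mem_erase.mp hi).2).1
        simp only [hl'def, hc'def, if_neg hi0, if_neg hij1]
      rw [← tail_eq]
      simp only [hl'def, hc'def, if_pos rfl, if_neg hj1ne0, if_true]
      rw [hw0, hwj1, TensorProduct.zero_tmul, zero_add, TensorProduct.add_tmul,
        TensorProduct.smul_tmul, add_assoc]
    exact hshort d l' c' j1 hc' (hTeq ▸ hTJ)
      (by simp only [hl'def, hc'def, if_neg hj1ne0, if_pos rfl, if_true, TensorProduct.zero_tmul])
      (hTeq ▸ hTne)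


end MainForward

theorem projectively_simple_base_change
    (k L : Type*) [Field k] [IsAlgClosed k] [Field L] [Algebra k L]
    {A : Type*} [Ring A] [Algebra k A]
    (𝒜 : ℕ → Submodule k A) [GradedAlgebra 𝒜]
    (hlf : ∀ n, FiniteDimensional k (𝒜 n)) :
    ProjectivelySimple k 𝒜 ↔
      ProjectivelySimple L (fun n => (𝒜 n).baseChange L (M := A) (R := k)) := by
  constructor
  · intro hPS
    constructor
    · intro h
      exact hPS.1 (findim_of_findim_baseChange h)
    · intro J hJne hJgr
      obtain ⟨a0, n, ha0ne, ha0mem, h1J⟩ := exists_one_tmul_mem 𝒜 hlf hPS J hJne hJgr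
      have hfd : FiniteDimensional k (A ⧸ Submodule.span k (homogIdealSet 𝒜 a0)) :=
        findim_quot_homogIdeal 𝒜 hPS ha0ne ha0mem
      have hsub : ∀ s ∈ Submodule.span k (homogIdealSet 𝒜 a0), (1:L) ⊗ₜ[k] s ∈ J := by
        intro s hs
        induction hs using Submodule.span_induction with
        | mem w hw =>
          obtain ⟨p, q, u, v, hu, hv, rfl⟩ := hw
          have heq : (1:L) ⊗ₜ[k] (u * a0 * v)
              = ((1:L) ⊗ₜ[k] u) * ((1:L) ⊗ₜ[k] a0) * ((1:L) ⊗ₜ[k] v) := by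
            rw [Algebra.TensorProduct.tmul_mul_tmul, Algebra.TensorProduct.tmul_mul_tmul,
              one_mul, one_mul]
          rw [heq]
          exact J.mul_mem_right _ _ (J.mul_mem_left _ _ h1J)
        | zero => rw [TensorProduct.tmul_zero]; exact J.zero_mem
        | add x y _ _ hx hy => rw [TensorProduct.tmul_add]; exact J.add_mem hx hy
        | smul e x _ hx =>
          rw [TensorProduct.tmul_smul, Algebra.smul_def]
          exact J.mul_mem_left _ _ hx
      exact findim_quotient_of_tmul_mem hsub hfd
  · intro hPSL
    constructor
    · intro h
      haveI := h
      exact hPSL.1 inferInstance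
    · intro I hIne hIgr
      set Jext : TwoSidedIdeal (L ⊗[k] A) := TwoSidedIdeal.mk'
        ((I.ksub k).baseChange L : Set (L ⊗[k] A))
        (Submodule.zero_mem _) (fun hx hy => Submodule.add_mem _ hx hy)
        (fun hx => Submodule.neg_mem _ hx)
        (fun {x y} hy => baseChange_mul_mem_left (fun a _ hs => I.mul_mem_left _ _ hs) hy)
        (fun {x y} hx => baseChange_mul_mem_right (fun a _ hs => I.mul_mem_right _ _ hs) hx)
        with hJdef
      have hJmem : ∀ x, x ∈ Jext ↔ x ∈ (I.ksub k).baseChange L := fun x =>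
        TwoSidedIdeal.mem_mk' _ _ _ _ _ _ x
      have hJksub : Jext.ksub L = (I.ksub k).baseChange L := Submodule.ext hJmem
      obtain ⟨x1, hx1I, hx1ne⟩ : ∃ x, x ∈ I ∧ x ≠ 0 := by
        by_contra h
        push_neg at h
        refine hIne (SetLike.ext fun x => ?_)
        rw [TwoSidedIdeal.mem_bot]
        exact ⟨fun hx => h x hx, fun hx => hx ▸ I.zero_mem⟩
      have hJne : Jext ≠ ⊥ := by
        intro h
        have h1 : (1:L) ⊗ₜ[k] x1 ∈ Jext :=
          (hJmem _).mpr (Submodule.tmul_mem_baseChange_of_mem 1 hx1I)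
        rw [h, TwoSidedIdeal.mem_bot] at h1
        exact one_tmul_ne_zero hx1ne h1
      have hJgr : IsGradedTwoSidedIdeal (fun n => (𝒜 n).baseChange L) Jext := by
        intro x hx
        have hx' : x ∈ (I.ksub k).baseChange L := (hJmem x).mp hx
        rw [Submodule.baseChange_eq_span] at hx'
        clear hx
        induction hx' using Submodule.span_induction with
        | mem w hw =>
          obtain ⟨s, hsI, rfl⟩ := hw
          have hs2 : s ∈ Submodule.span k {x : A | x ∈ I ∧ ∃ n, x ∈ 𝒜 n} := hIgr hsI
          simp only [TensorProduct.mk_apply]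
          clear hsI
          induction hs2 using Submodule.span_induction with
          | mem h hh =>
            refine Submodule.subset_span ⟨?_, ?_⟩
            · exact (hJmem _).mpr (Submodule.tmul_mem_baseChange_of_mem 1 hh.1)
            · obtain ⟨n, hn⟩ := hh.2
              exact ⟨n, Submodule.tmul_mem_baseChange_of_mem 1 hn⟩
          | zero => rw [TensorProduct.tmul_zero]; exact Submodule.zero_mem _
          | add y y' _ _ hy hy' => rw [TensorProduct.tmul_add]; exact Submodule.add_mem _ hy hy'
          | smul e y _ hy =>
            rw [TensorProduct.tmul_smul]
            have := Submodule.smul_mem _ (algebraMap k L e) hy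
            rwa [algebraMap_smul] at this
        | zero => exact Submodule.zero_mem _
        | add y y' _ _ hy hy' => exact Submodule.add_mem _ hy hy'
        | smul r y _ hy => exact Submodule.smul_mem _ r hy
      have hres := hPSL.2 Jext hJne hJgr
      rw [hJksub] at hres
      exact findim_of_baseChange_quotient hres
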